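/- Let n be a natural number, C : Fin n → E, d̂ : Fin n → ℝ and P̃ ∈ E with ‖C i − P̃‖ ≤ d̂ i for every i. For every unit vector u and every real r ≥ 0, the set of challengers whose disk covers the point P̃ + r • u equals the set of challengers whose directional uncertainty in direction u is at least r: {i ∈ Fin n | dist (P̃ + r • u) (C i) ≤ d̂ i} = {i ∈ Fin n | r ≤ R(C i, d̂ i, P̃, u)}. In particular, the point at distance r in direction u is covered by at least (n − f) of the disks if and only if r is at most the (f+1)-th smallest of the values R(C i, d̂ i, P̃, u). -/

import Mathlib

/-- The plane. -/
local notation "E" => EuclideanSpace ℝ (Fin 2)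

/-- Directional uncertainty `R(C, d̂, P̃, u) = s + sqrt (d̂² − d̃² + s²)`,
where `d̃ = ‖C − P̃‖` and `s = ⟪C − P̃, u⟫_ℝ`. -/
noncomputable def dirUnc (C Pt : EuclideanSpace ℝ (Fin 2)) (dhat : ℝ)
    (u : EuclideanSpace ℝ (Fin 2)) : ℝ :=
  (inner ℝ (C - Pt) u : ℝ) +
    Real.sqrt (dhat ^ 2 - ‖C - Pt‖ ^ 2 + (inner ℝ (C - Pt) u : ℝ) ^ 2)


/-- The set of challengers whose disk covers the point `P̃ + r • u` equals the
set of challengers whose directional uncertainty in direction `u` is at least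
`r`. -/
theorem covering_set_eq (n : ℕ) (C : Fin n → E) (dhat : Fin n → ℝ) (Pt : E)
    (h : ∀ i, ‖C i - Pt‖ ≤ dhat i) (u : E) (hu : ‖u‖ = 1) (r : ℝ) (hr : 0 ≤ r) :
    {i : Fin n | dist (Pt + r • u) (C i) ≤ dhat i} =
      {i : Fin n | r ≤ dirUnc (C i) Pt (dhat i) u} := by
  ext i
  simp only [Set.mem_setOf_eq, dirUnc]
  set v : E := C i - Pt with hv
  set s : ℝ := (inner ℝ v u : ℝ) with hs
  set A : ℝ := dhat i ^ 2 - ‖v‖ ^ 2 + s ^ 2 with hA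
  have hvn : (0:ℝ) ≤ ‖v‖ := norm_nonneg v
  have hd : ‖v‖ ≤ dhat i := h i
  have hsle : |s| ≤ ‖v‖ := by
    have h0 := abs_real_inner_le_norm v u
    rw [hu, mul_one] at h0
    exact h0
  have hs2 : s ^ 2 ≤ ‖v‖ ^ 2 := by
    have := sq_abs s
    nlinarith [abs_nonneg s]
  have hApos : 0 ≤ A := by nlinarith
  have hsqA : Real.sqrt A ^ 2 = A := Real.sq_sqrt hApos
  have hsqAnn : 0 ≤ Real.sqrt A := Real.sqrt_nonneg A
  have hdist : dist (Pt + r • u) (C i) = ‖v - r • u‖ := by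
    rw [dist_eq_norm, show Pt + r • u - C i = -(v - r • u) by rw [hv]; module,
      norm_neg]
  have hnorm2 : ‖v - r • u‖ ^ 2 = ‖v‖ ^ 2 - 2 * r * s + r ^ 2 := by
    rw [norm_sub_sq_real, real_inner_smul_right, norm_smul, hu, mul_one,
      Real.norm_eq_abs, abs_of_nonneg hr, ← hs]
    ring
  rw [hdist]
  constructor
  · intro hle
    have h2 : ‖v - r • u‖ ^ 2 ≤ dhat i ^ 2 := by
      nlinarith [norm_nonneg (v - r • u)]
    have h3 : (r - s) ^ 2 ≤ A := by nlinarith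
    have h4 : |r - s| ≤ Real.sqrt A := by
      have := Real.sqrt_le_sqrt h3
      rwa [Real.sqrt_sq_eq_abs] at this
    have := le_abs_self (r - s)
    linarith
  · intro hle
    have hsA : s ≤ Real.sqrt A := by
      have h1 : Real.sqrt (s ^ 2) ≤ Real.sqrt A := Real.sqrt_le_sqrt (by nlinarith)
      rw [Real.sqrt_sq_eq_abs] at h1
      exact le_trans (le_abs_self s) h1
    have hlow : -(Real.sqrt A) ≤ r - s := by linarith
    have h2 : (r - s) ^ 2 ≤ A := by nlinarith
    have h3 : ‖v - r • u‖ ^ 2 ≤ dhat i ^ 2 := by nlinarith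
    have h4 := Real.sqrt_le_sqrt h3
    rwa [Real.sqrt_sq (norm_nonneg _), Real.sqrt_sq (le_trans hvn hd)] at h4
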